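/- Let C > 0 and let a, b > 1 with θ := log a satisfying θ ≥ 1 and θ · e^{−θ} ≤ 1/(12 C), and with li(b) = li(a) + C. Let y ≥ θ and set y′ = y + C · y · e^{−y}. Then y′ − log b ≥ (y − θ)/2 ≥ 0. -/

import Mathlib

open Real Set intervalIntegral

noncomputable def li (t : ℝ) : ℝ := ∫ τ in (2:ℝ)..t, 1 / Real.log τ

lemma contOn_inv_log {s : Set ℝ} (hs : s ⊆ Ioi 1) :
    ContinuousOn (fun τ : ℝ => 1 / Real.log τ) s := by
  apply ContinuousOn.div continuousOn_const
  · exact (Real.continuousOn_log).mono (fun x hx => ne_of_gt (lt_trans one_pos (hs hx)))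
  · intro x hx
    exact ne_of_gt (Real.log_pos (hs hx))

lemma li_hasDerivAt {t : ℝ} (ht : 1 < t) :
    HasDerivAt li (1 / Real.log t) t := by
  apply intervalIntegral.integral_hasDerivAt_right
  · apply ContinuousOn.intervalIntegrable
    apply contOn_inv_log
    intro x hx
    rcases le_total 2 t with h | h
    · rw [uIcc_of_le h] at hx; exact lt_of_lt_of_le one_lt_two hx.1
    · rw [uIcc_of_ge h] at hx; exact lt_of_lt_of_le ht hx.1
  · exact (contOn_inv_log (subset_refl _)).stronglyMeasurableAtFilter isOpen_Ioi _ ht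
  · exact (contOn_inv_log (subset_refl _)).continuousAt (Ioi_mem_nhds ht)

lemma li_strictMonoOn : StrictMonoOn li (Ioi (1:ℝ)) := by
  apply strictMonoOn_of_deriv_pos (convex_Ioi 1)
  · intro x hx
    exact (li_hasDerivAt hx).continuousAt.continuousWithinAt
  · intro x hx
    rw [interior_Ioi] at hx
    rw [(li_hasDerivAt hx).deriv]
    exact div_pos one_pos (Real.log_pos hx)

lemma li_exp_growth {θ B : ℝ} (hθ : 1 ≤ θ) (hB : θ ≤ B) :
    Real.exp θ / θ * (B - θ) ≤ li (Real.exp B) - li (Real.exp θ) := by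
  have hθ0 : (0:ℝ) < θ := lt_of_lt_of_le one_pos hθ
  have hderiv : ∀ s ∈ Ioi (0:ℝ), HasDerivAt (fun u => li (Real.exp u)) (Real.exp s / s) s := by
    intro s hs
    have h1 : (1:ℝ) < Real.exp s := by
      rw [← Real.exp_zero]; exact Real.exp_lt_exp.2 hs
    have := (li_hasDerivAt h1).comp s (Real.hasDerivAt_exp s)
    rw [Real.log_exp] at this
    exact this.congr_deriv (by ring)
  have key := Convex.mul_sub_le_image_sub_of_le_deriv (convex_Icc θ B)
    (f := fun u => li (Real.exp u)) (C := Real.exp θ / θ)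
    (fun s hs => ((hderiv s (lt_of_lt_of_le hθ0 hs.1)).continuousAt).continuousWithinAt)
    (fun s hs => by
      have hs' : s ∈ Ioo θ B := by rwa [interior_Icc] at hs
      exact ((hderiv s (lt_of_lt_of_le hθ0 hs'.1.le)).differentiableAt).differentiableWithinAt)
    (fun s hs => by
      have hs' : s ∈ Ioo θ B := by rwa [interior_Icc] at hs
      have hs0 : 0 < s := lt_of_lt_of_le hθ0 hs'.1.le
      rw [((hderiv s hs0).deriv)]
      rw [div_le_div_iff₀ hθ0 hs0]
      have h1 : s - θ + 1 ≤ Real.exp (s - θ) := Real.add_one_le_exp _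
      have h2 : Real.exp s = Real.exp θ * Real.exp (s - θ) := by
        rw [← Real.exp_add]; ring_nf
      have h3 : 0 < Real.exp θ := Real.exp_pos _
      nlinarith [mul_nonneg h3.le (mul_nonneg (sub_nonneg.2 hθ) (sub_nonneg.2 hs'.1.le)),
        mul_le_mul_of_nonneg_left h1 (mul_nonneg h3.le hθ0.le)])
    θ (left_mem_Icc.2 hB) B (right_mem_Icc.2 hB) hB
  exact key

/-- Single induction step in the lower-bound analysis of the Euler scheme
`σ_{k+1} = σ_k (1 + C e^{−σ_k})` for the ODE `f' = C f e^{−f}`: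
with `θ = log a`, `li b = li a + C` and `y ≥ θ`, setting `y' = y + C y e^{−y}`
one has `y' − log b ≥ (y − θ)/2 ≥ 0`. -/
theorem euler_step_lower_bound
    (C a b y : ℝ) (hC : 0 < C) (ha : 1 < a) (hb : 1 < b)
    (hθ1 : 1 ≤ Real.log a)
    (hθ2 : Real.log a * Real.exp (-(Real.log a)) ≤ 1 / (12 * C))
    (hli : li b = li a + C)
    (hy : Real.log a ≤ y) :
    (y - Real.log a) / 2 ≤ y + C * y * Real.exp (-y) - Real.log b ∧
      0 ≤ (y - Real.log a) / 2 := by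
  set θ := Real.log a with hθdef
  have hθ0 : (0:ℝ) < θ := lt_of_lt_of_le one_pos hθ1
  set B := θ + C * θ * Real.exp (-θ) with hBdef
  have hxpos : 0 < C * θ * Real.exp (-θ) := by positivity
  have hB : θ ≤ B := by linarith
  -- key bound : log b ≤ B
  have hgrow := li_exp_growth hθ1 hB
  have hexpθ : Real.exp θ = a := Real.exp_log (lt_trans one_pos ha)
  have hval : Real.exp θ / θ * (B - θ) = C := by
    have h1 : Real.exp θ * Real.exp (-θ) = 1 := by
      rw [← Real.exp_add]; simp
    have h2 : Real.exp θ / θ * (B - θ) = C * (Real.exp θ * Real.exp (-θ)) * (θ / θ) := by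
      rw [hBdef]; ring
    rw [h2, h1, div_self hθ0.ne']; ring
  have hliB : li b ≤ li (Real.exp B) := by
    rw [hli, ← hexpθ]
    linarith [hgrow, hval.ge, hval.le]
  have hlogb : Real.log b ≤ B := by
    by_contra hcon
    push_neg at hcon
    have hbB : Real.exp B < b := by
      have := Real.exp_lt_exp.2 hcon
      rwa [Real.exp_log (lt_trans one_pos hb)] at this
    have h1B : (1:ℝ) < Real.exp B := by
      rw [← Real.exp_zero]; exact Real.exp_lt_exp.2 (by linarith)
    have := li_strictMonoOn (mem_Ioi.2 h1B) (mem_Ioi.2 hb) hbB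
    linarith
  -- arithmetic finish
  have hh : 0 ≤ y - θ := by linarith
  refine ⟨?_, by linarith⟩
  have hCθ : C * (θ * Real.exp (-θ)) ≤ 1 / 12 := by
    have h12 : (0:ℝ) < 12 * C := by linarith
    have := mul_le_mul_of_nonneg_left hθ2 hC.le
    calc C * (θ * Real.exp (-θ)) ≤ C * (1 / (12 * C)) := this
      _ = 1 / 12 := by field_simp
  have hexpy : Real.exp (-y) = Real.exp (-θ) * Real.exp (-(y - θ)) := by
    rw [← Real.exp_add]; ring_nf
  have hlb : 1 - (y - θ) ≤ Real.exp (-(y - θ)) := by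
    have := Real.add_one_le_exp (-(y - θ)); linarith
  have heθ : 0 < Real.exp (-θ) := Real.exp_pos _
  have hey : 0 < Real.exp (-(y - θ)) := Real.exp_pos _
  -- y * exp(-y) ≥ θ e^{-θ} - θ e^{-θ} (y-θ)
  have hmain : θ * Real.exp (-θ) - y * Real.exp (-y) ≤ θ * Real.exp (-θ) * (y - θ) := by
    rw [hexpy]
    nlinarith [mul_le_mul_of_nonneg_left hlb (mul_nonneg hθ0.le heθ.le),
      mul_nonneg hh (mul_nonneg heθ.le hey.le)]
  have hfin : C * (θ * Real.exp (-θ) - y * Real.exp (-y)) ≤ (y - θ) / 2 := by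
    calc C * (θ * Real.exp (-θ) - y * Real.exp (-y))
        ≤ C * (θ * Real.exp (-θ) * (y - θ)) := by
          exact mul_le_mul_of_nonneg_left hmain hC.le
      _ = (C * (θ * Real.exp (-θ))) * (y - θ) := by ring
      _ ≤ (1/12) * (y - θ) := mul_le_mul_of_nonneg_right hCθ hh
      _ ≤ (y - θ) / 2 := by linarith
  have : Real.log b ≤ θ + C * (θ * Real.exp (-θ)) := by
    rw [hBdef] at hlogb; linarith
  nlinarith [hfin, this]
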